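/- Let G be a finite p-group and i ≥ 1. Then the i-th derived subgroup G^{(i)} is contained in the kernel of every complex representation of G of dimension at most p^{i-1}. -/

import Mathlib

open Module Polynomial

universe u v

section Helpers

/-- Diagonalizability of a finite-order endomorphism over `ℂ`. -/
lemma eig_top {V : Type*} [AddCommGroup V] [Module ℂ V] [FiniteDimensional ℂ V]
    (T : Module.End ℂ V) (N : ℕ) (hN : N ≠ 0) (h : T ^ N = 1) :
    ⨆ μ : ℂ, T.eigenspace μ = ⊤ := by
  have hsq : Squarefree (X ^ N - C (1:ℂ)) :=
    (Polynomial.separable_X_pow_sub_C (1:ℂ)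
      (by exact_mod_cast (Nat.cast_ne_zero (R := ℂ)).mpr hN) one_ne_zero).squarefree
  have haev : aeval T (X ^ N - C (1:ℂ)) = 0 := by simp [map_sub, h]
  have hss : T.IsSemisimple := Module.End.isSemisimple_of_squarefree_aeval_eq_zero hsq haev
  have := Module.End.iSup_maxGenEigenspace_eq_top T
  rw [← this]
  congr 1
  funext μ
  exact (hss.isFinitelySemisimple.maxGenEigenspace_eq_eigenspace μ).symm

lemma disj_biSup {ι : Type*} {R M : Type*} [Ring R] [AddCommGroup M] [Module R M]
    (E : ι → Submodule R M) (h : iSupIndep E) {A B : Set ι} (hAB : Disjoint A B) :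
    Disjoint (⨆ c ∈ A, E c) (⨆ c ∈ B, E c) := by
  classical
  rw [Submodule.disjoint_def]
  intro x hxA hxB
  rw [Submodule.mem_biSup_iff_exists_dfinsupp (· ∈ A)] at hxA
  rw [Submodule.mem_biSup_iff_exists_dfinsupp (· ∈ B)] at hxB
  obtain ⟨f, hf⟩ := hxA
  obtain ⟨g, hg⟩ := hxB
  have hinj := h.dfinsupp_lsum_injective
  have hfg : (f.filter (· ∈ A)) = (g.filter (· ∈ B)) := by
    apply hinj; rw [hf, hg]
  have hF0 : f.filter (· ∈ A) = 0 := by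
    ext i
    by_cases hiA : i ∈ A
    · have hiB : i ∉ B := fun hb => (hAB.le_bot ⟨hiA, hb⟩)
      have := DFunLike.congr_fun hfg i
      simpa [DFinsupp.filter_apply, hiA, hiB] using this
    · simp [DFinsupp.filter_apply, hiA]
  rw [← hf, hF0, map_zero]

lemma sum_finrank_le {κ : Type*} [Fintype κ] {K V : Type*} [Field K] [AddCommGroup V]
    [Module K V] [FiniteDimensional K V] (W : κ → Submodule K V) (h : iSupIndep W) :
    ∑ t, finrank K (W t) ≤ finrank K V := by
  classical
  have key : ∀ s : Finset κ, ∑ t ∈ s, finrank K (W t)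
      = finrank K (⨆ t ∈ s, W t : Submodule K V) := by
    intro s
    induction s using Finset.induction with
    | empty =>
      rw [show (⨆ t ∈ (∅ : Finset κ), W t) = (⊥ : Submodule K V) by simp]
      rw [finrank_bot, Finset.sum_empty]
    | @insert a s ha ih =>
      have hdisj : Disjoint (W a) (⨆ t ∈ (s : Finset κ), W t) := by
        refine Disjoint.mono_right ?_ (h.disjoint_biSup (y := (s : Set κ)) (by simpa using ha))
        exact le_of_eq rfl
      have hinf : (W a ⊓ ⨆ t ∈ s, W t) = ⊥ := disjoint_iff.mp hdisj
      have hsum := Submodule.finrank_sup_add_finrank_inf_eq (W a) (⨆ t ∈ s, W t)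
      rw [Finset.sum_insert ha, ih, Finset.iSup_insert]
      rw [hinf, finrank_bot, Nat.add_zero] at hsum
      exact hsum.symm
  calc ∑ t, finrank K (W t) = finrank K (⨆ t ∈ Finset.univ, W t : Submodule K V) := key _
    _ ≤ finrank K V := Submodule.finrank_le _

/-- Every endomorphism of a space of dimension at most 1 is scalar. -/
lemma endo_scalar {K V : Type*} [Field K] [AddCommGroup V] [Module K V] [Module.Finite K V]
    (hV : finrank K V ≤ 1) (f : Module.End K V) : ∃ c : K, f = c • 1 := by
  rw [finrank_le_one_iff] at hV
  obtain ⟨v, hv⟩ := hV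
  obtain ⟨c₀, hc₀⟩ := hv (f v)
  refine ⟨c₀, ?_⟩
  ext w
  obtain ⟨c, rfl⟩ := hv w
  simp only [LinearMap.smul_apply, Module.End.one_apply, map_smul, hc₀]

/-- Restriction of a representation to an invariant submodule. -/
def subRep {G V : Type*} [Group G] [AddCommGroup V] [Module ℂ V] (ρ : Representation ℂ G V)
    (W : Submodule ℂ V) (hW : ∀ g, ∀ v ∈ W, ρ g v ∈ W) : Representation ℂ G ↥W where
  toFun g := (ρ g).restrict (fun v hv => hW g v hv)
  map_one' := by
    ext v
    simp [LinearMap.restrict_apply]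
  map_mul' g h := by
    ext v
    simp [LinearMap.restrict_apply]

lemma subRep_apply {G V : Type*} [Group G] [AddCommGroup V] [Module ℂ V]
    (ρ : Representation ℂ G V) (W : Submodule ℂ V) (hW : ∀ g, ∀ v ∈ W, ρ g v ∈ W)
    (g : G) (v : ↥W) : (subRep ρ W hW g v : V) = ρ g ↑v := rfl

/-- Derived series of `G` versus derived series of a subgroup containing the commutator. -/
lemma derived_chain {G : Type*} [Group G] (H : Subgroup G)
    (hcomm : derivedSeries G 1 ≤ H) :
    ∀ j, derivedSeries G (j + 1) ≤ Subgroup.map H.subtype (derivedSeries ↥H j) := by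
  intro j
  induction j with
  | zero =>
    rw [derivedSeries_zero, ← MonoidHom.range_eq_map, Subgroup.range_subtype]
    exact hcomm
  | succ j ih =>
    have : derivedSeries G (j + 2) = ⁅derivedSeries G (j+1), derivedSeries G (j+1)⁆ :=
      derivedSeries_succ G (j+1)
    rw [this, derivedSeries_succ ↥H j, Subgroup.map_commutator]
    exact Subgroup.commutator_mono ih ih

lemma derived_le_one {G : Type*} [Group G] (k : ℕ) :
    derivedSeries G (k + 1) ≤ derivedSeries G 1 := by
  rw [derivedSeries_succ, derivedSeries_one]
  exact Subgroup.commutator_mono le_top le_top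

end Helpers

section Main

theorem main {p : ℕ} (hp : p.Prime) (i : ℕ) :
    ∀ (n : ℕ) (G : Type u) (_ : Group G) (_ : Finite G) (hG : IsPGroup p G)
      (V : Type v) (_ : AddCommGroup V) (_ : Module ℂ V) (_ : FiniteDimensional ℂ V)
      (ρ : Representation ℂ G V), finrank ℂ V = n → n ≤ p ^ i →
      ∀ g ∈ derivedSeries G (i + 1), ρ g = 1 := by
  haveI := Fact.mk hp
  induction i using Nat.strong_induction_on with
  | _ i IHi =>
  intro n
  induction n using Nat.strong_induction_on with
  | _ n IHn =>
  intro G _ _ hG V _ _ _ ρ hn hle g hg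
  classical
  -- trivial case
  by_cases hV : Subsingleton V
  · ext v; exact Subsingleton.elim _ _
  haveI hVnt : Nontrivial V := not_subsingleton_iff_nontrivial.mp hV
  -- basic invertibility facts
  have hinv : ∀ x : G, ρ x * ρ x⁻¹ = 1 := fun x => by
    rw [← map_mul, mul_inv_cancel, map_one]
  have hinv' : ∀ x : G, ρ x⁻¹ * ρ x = 1 := fun x => by
    rw [← map_mul, inv_mul_cancel, map_one]
  have happly : ∀ (x : G) (v : V), ρ x⁻¹ (ρ x v) = v := fun x v => by
    rw [← Module.End.mul_apply, hinv', Module.End.one_apply]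
  have hρx0 : ∀ x : G, ρ x ≠ 0 := by
    intro x h0
    obtain ⟨v, hv⟩ := exists_ne (0 : V)
    apply hv
    calc v = ρ x⁻¹ (ρ x v) := (happly x v).symm
      _ = ρ x⁻¹ ((0 : Module.End ℂ V) v) := by rw [h0]
      _ = 0 := by simp
  have hcanc : ∀ (x : G) (X : Submodule ℂ V), (X.map (ρ x⁻¹)).map (ρ x) = X := by
    intro x X
    rw [← Submodule.map_comp, ← Module.End.mul_eq_comp, hinv, Module.End.one_eq_id,
      Submodule.map_id]
  have hfr : ∀ (x : G) (X : Submodule ℂ V), finrank ℂ (X.map (ρ x)) = finrank ℂ X := by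
    intro x X
    have h1 : (ρ x).comp (ρ x⁻¹) = LinearMap.id := by
      rw [← Module.End.mul_eq_comp, hinv, Module.End.one_eq_id]
    have h2 : (ρ x⁻¹).comp (ρ x) = LinearMap.id := by
      rw [← Module.End.mul_eq_comp, hinv', Module.End.one_eq_id]
    exact LinearEquiv.finrank_map_eq (LinearEquiv.ofLinear (ρ x) (ρ x⁻¹) h1 h2) X
  -- the abelian step
  have ker_step : (∀ x y : G, ρ x * ρ y = ρ y * ρ x) → ρ g = 1 := by
    intro hcom
    have hKr : ∀ x ∈ derivedSeries G 1, ρ x = 1 := by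
      have hsub : derivedSeries G 1 ≤
          { carrier := {x : G | ρ x = 1}
            one_mem' := map_one ρ
            mul_mem' := fun {x y} hx hy => by
              show ρ (x * y) = 1
              rw [map_mul, hx, hy, one_mul]
            inv_mem' := fun {x} hx => by
              show ρ x⁻¹ = 1
              have := hinv' x
              rw [hx, mul_one] at this
              exact this } := by
        rw [derivedSeries_one, commutator_def, Subgroup.commutator_le]
        intro x _ y _
        open scoped commutatorElement in show ρ ⁅x, y⁆ = 1
        rw [commutatorElement_def, map_mul, map_mul, map_mul, hcom x y,
          mul_assoc (ρ y) (ρ x), hinv x, mul_one, hinv y]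
      exact fun x hx => hsub hx
    exact hKr g (derived_le_one i hg)
  -- scalar case
  by_cases hsc : ∀ x : G, ∃ c : ℂ, ρ x = c • 1
  · apply ker_step
    intro x y
    obtain ⟨c, hc⟩ := hsc x
    obtain ⟨d, hd⟩ := hsc y
    rw [hc, hd, smul_mul_assoc, mul_smul_comm, smul_mul_assoc, mul_smul_comm,
      smul_smul, smul_smul, mul_comm c d]
  -- hence i ≥ 1
  have hi1 : 1 ≤ i := by
    by_contra hi0
    push_neg at hi0
    have hi0' : i = 0 := by omega
    subst hi0'
    rw [pow_zero] at hle
    exact hsc fun x => endo_scalar (le_trans (le_of_eq hn) hle) (ρ x)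
  push_neg at hsc
  -- the scalar subgroup S and the quotient
  have hone0 : (1 : Module.End ℂ V) ≠ 0 := by
    intro h
    obtain ⟨v, hv⟩ := exists_ne (0 : V)
    apply hv
    calc v = (1 : Module.End ℂ V) v := rfl
      _ = (0 : Module.End ℂ V) v := by rw [h]
      _ = 0 := rfl
  set S : Subgroup G := {
    carrier := {x : G | ∃ c : ℂ, ρ x = c • 1}
    one_mem' := ⟨1, by rw [map_one, one_smul]⟩
    mul_mem' := fun {x y} hx hy => by
      obtain ⟨c, hc⟩ := hx
      obtain ⟨d, hd⟩ := hy
      exact ⟨c * d, by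
        rw [map_mul, hc, hd, smul_mul_assoc, mul_smul_comm, smul_smul, one_mul]⟩
    inv_mem' := fun {x} hx => by
      obtain ⟨c, hc⟩ := hx
      have hc0 : c ≠ 0 := by
        intro h0
        rw [h0, zero_smul] at hc
        exact hρx0 x hc
      refine ⟨c⁻¹, ?_⟩
      have h1 : ρ x⁻¹ * ρ x = 1 := hinv' x
      rw [hc, mul_smul_comm, mul_one] at h1
      rw [← h1, smul_smul, inv_mul_cancel₀ hc0, one_smul] } with hSdef
  have memS : ∀ {x : G}, x ∈ S ↔ ∃ c : ℂ, ρ x = c • 1 := fun {x} => Iff.rfl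
  haveI hSnormal : S.Normal := by
    constructor
    intro x hx g'
    obtain ⟨c, hc⟩ := memS.mp hx
    refine memS.mpr ⟨c, ?_⟩
    rw [map_mul, map_mul, hc, mul_smul_comm, mul_one, smul_mul_assoc, hinv g']
  obtain ⟨x₀, hx₀⟩ := hsc
  have hx₀S : x₀ ∉ S := fun h => by
    obtain ⟨c, hc⟩ := memS.mp h
    exact hx₀ c hc
  haveI : Nontrivial (G ⧸ S) :=
    ⟨⟨QuotientGroup.mk x₀, 1, by
      rw [Ne, QuotientGroup.eq_one_iff]
      exact hx₀S⟩⟩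
  have hQ : IsPGroup p (G ⧸ S) := hG.to_quotient S
  have hcent := hQ.center_nontrivial
  obtain ⟨z, hz1⟩ := exists_ne (1 : Subgroup.center (G ⧸ S))
  obtain ⟨a, ha⟩ := QuotientGroup.mk_surjective (z : G ⧸ S)
  have haS : a ∉ S := by
    intro h
    apply hz1
    have h1 : (z : G ⧸ S) = 1 := by rw [← ha, QuotientGroup.eq_one_iff]; exact h
    exact Subtype.ext h1
  have hcen : ∀ x : G, x⁻¹ * a⁻¹ * x * a ∈ S := by
    intro x
    have hz := Subgroup.mem_center_iff.mp z.2 (QuotientGroup.mk x)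
    have hmk : (QuotientGroup.mk (a * x) : G ⧸ S) = QuotientGroup.mk (x * a) := by
      rw [QuotientGroup.mk_mul, QuotientGroup.mk_mul, ha]
      exact (hz).symm
    have h2 := QuotientGroup.eq.mp hmk
    have e : (a * x)⁻¹ * (x * a) = x⁻¹ * a⁻¹ * x * a := by group
    rwa [e] at h2
  -- the character ν
  have hν : ∀ x : G, ∃ c : ℂ, ρ (x⁻¹ * a * x) = c • ρ a := by
    intro x
    obtain ⟨c, hc⟩ := memS.mp (S.inv_mem (hcen x))
    refine ⟨c, ?_⟩
    have e : x⁻¹ * a * x = a * (x⁻¹ * a⁻¹ * x * a)⁻¹ := by group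
    rw [e, map_mul, hc, mul_smul_comm, mul_one]
  have hρa0 : ρ a ≠ 0 := hρx0 a
  have uniq : ∀ {c d : ℂ}, c • ρ a = d • ρ a → c = d := by
    intro c d h
    by_contra hcd
    apply hρa0
    have h1 : (c - d) • ρ a = 0 := by rw [sub_smul, h, sub_self]
    rcases smul_eq_zero.mp h1 with h2 | h2
    · exact absurd (sub_eq_zero.mp h2) hcd
    · exact h2
  set ν : G → ℂ := fun x => (hν x).choose with hνdef
  have hνs : ∀ x : G, ρ (x⁻¹ * a * x) = ν x • ρ a := fun x => (hν x).choose_spec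
  have hν1 : ν 1 = 1 := by
    apply uniq
    rw [← hνs 1, one_smul]
    congr 1
    group
  have hνm : ∀ x y : G, ν (x * y) = ν x * ν y := by
    intro x y
    apply uniq
    rw [← hνs (x * y)]
    have e : (x * y)⁻¹ * a * (x * y) = (y⁻¹ * (x⁻¹ * a * x)) * y := by group
    rw [e, map_mul, map_mul, hνs x, mul_smul_comm, smul_mul_assoc, mul_assoc,
      ← map_mul, ← map_mul]
    have e2 : y⁻¹ * (a * y) = y⁻¹ * a * y := by group
    rw [e2, hνs y, smul_smul]
  have hν0 : ∀ x : G, ν x ≠ 0 := by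
    intro x h0
    apply hρx0 (x⁻¹ * a * x)
    rw [hνs x, h0, zero_smul]
  have hνinv : ∀ x : G, ν x⁻¹ * ν x = 1 := by
    intro x
    rw [← hνm, inv_mul_cancel, hν1]
  -- eigenspaces of T = ρ a
  set T : Module.End ℂ V := ρ a with hTdef
  set E : ℂ → Submodule ℂ V := fun μ => T.eigenspace μ with hEdef
  haveI := Fintype.ofFinite G
  have diag : ⨆ μ : ℂ, E μ = ⊤ := by
    have hTN : T ^ Fintype.card G = 1 := by
      rw [hTdef, ← map_pow, pow_card_eq_one, map_one]
    exact eig_top T (Fintype.card G) Fintype.card_ne_zero hTN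
  have hmapLe : ∀ (x : G) (μ : ℂ), (E μ).map (ρ x) ≤ E (ν x * μ) := by
    intro x μ
    rintro _ ⟨v, hv, rfl⟩
    have hv' : T v = μ • v := Module.End.mem_eigenspace_iff.mp hv
    show ρ x v ∈ T.eigenspace (ν x * μ)
    rw [Module.End.mem_eigenspace_iff]
    have hTx : T * ρ x = ρ x * (ν x • T) := by
      rw [hTdef]
      calc ρ a * ρ x = ρ (a * x) := (map_mul ρ a x).symm
        _ = ρ (x * (x⁻¹ * a * x)) := by rw [show a * x = x * (x⁻¹ * a * x) by group]
        _ = ρ x * ρ (x⁻¹ * a * x) := map_mul ρ _ _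
        _ = ρ x * (ν x • ρ a) := by rw [hνs x]
    calc T (ρ x v) = (T * ρ x) v := rfl
      _ = (ρ x * (ν x • T)) v := by rw [hTx]
      _ = ρ x ((ν x • T) v) := rfl
      _ = ρ x (ν x • (μ • v)) := by rw [LinearMap.smul_apply, hv']
      _ = (ν x * μ) • ρ x v := by rw [map_smul, map_smul, smul_smul]
  have hmapEq : ∀ (x : G) (μ : ℂ), (E μ).map (ρ x) = E (ν x * μ) := by
    intro x μ
    refine le_antisymm (hmapLe x μ) ?_
    have h2 := hmapLe x⁻¹ (ν x * μ)
    have e : ν x⁻¹ * (ν x * μ) = μ := by rw [← mul_assoc, hνinv, one_mul]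
    rw [e] at h2
    calc E (ν x * μ) = ((E (ν x * μ)).map (ρ x⁻¹)).map (ρ x) := (hcanc x _).symm
      _ ≤ (E μ).map (ρ x) := Submodule.map_mono h2
  -- main case split
  by_cases hred : ∃ μ : ℂ, E μ ≠ ⊥ ∧ (⨆ x : G, (E μ).map (ρ x)) ≠ ⊤
  · -- reducible case : recurse on dimension
    obtain ⟨μ0, hμ0, hBne⟩ := hred
    set Φ : Set ℂ := Set.range (fun x : G => ν x * μ0) with hΦdef
    set B : Submodule ℂ V := ⨆ x : G, (E μ0).map (ρ x) with hBdef
    set B' : Submodule ℂ V := ⨆ c ∈ Φᶜ, E c with hB'def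
    have hBeig : B = ⨆ c ∈ Φ, E c := by
      rw [hΦdef, iSup_range, hBdef]
      exact iSup_congr fun x => hmapEq x μ0
    have hdisjBB : Disjoint B B' := by
      rw [hBeig, hB'def]
      exact disj_biSup E T.eigenspaces_iSupIndep disjoint_compl_right
    have hsupBB : B ⊔ B' = ⊤ := by
      rw [eq_top_iff, ← diag]
      refine iSup_le fun c => ?_
      by_cases hc : c ∈ Φ
      · exact le_sup_of_le_left (hBeig ▸ le_biSup E hc)
      · exact le_sup_of_le_right (hB'def ▸ le_biSup E hc)
    have hBinv : ∀ x : G, ∀ v ∈ B, ρ x v ∈ B := by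
      intro x v hv
      have hle' : B.map (ρ x) ≤ B := by
        rw [hBdef, Submodule.map_iSup]
        refine iSup_le fun y => ?_
        rw [← Submodule.map_comp, ← Module.End.mul_eq_comp, ← map_mul]
        exact le_iSup (fun x : G => (E μ0).map (ρ x)) (x * y)
      exact hle' ⟨v, hv, rfl⟩
    have hB'inv : ∀ x : G, ∀ v ∈ B', ρ x v ∈ B' := by
      intro x v hv
      have hle' : B'.map (ρ x) ≤ B' := by
        rw [hB'def]
        simp only [Submodule.map_iSup]
        refine iSup_le fun c => iSup_le fun hc => ?_
        rw [hmapEq x c]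
        refine le_biSup E ?_
        intro hmem
        apply hc
        obtain ⟨y, hy⟩ := hmem
        have hy' : ν y * μ0 = ν x * c := hy
        refine ⟨x⁻¹ * y, ?_⟩
        have : ν x⁻¹ * (ν x * c) = ν x⁻¹ * (ν y * μ0) := by rw [hy']
        rw [← mul_assoc, hνinv, one_mul, ← mul_assoc, ← hνm] at this
        exact this.symm
      exact hle' ⟨v, hv, rfl⟩
    have hEB : E μ0 ≤ B := by
      have h1 : (E μ0).map (ρ 1) ≤ B := hBdef ▸ le_iSup (fun x : G => (E μ0).map (ρ x)) 1
      rwa [map_one, Module.End.one_eq_id, Submodule.map_id] at h1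
    have hBbot : B ≠ ⊥ := fun h => hμ0 (le_bot_iff.mp (h ▸ hEB))
    have hB'top : B' ≠ ⊤ := by
      intro h
      rw [h, disjoint_top] at hdisjBB
      exact hBbot hdisjBB
    have hBlt : finrank ℂ ↥B < n := hn ▸ Submodule.finrank_lt hBne
    have hB'lt : finrank ℂ ↥B' < n := hn ▸ Submodule.finrank_lt hB'top
    have hA := IHn (finrank ℂ ↥B) hBlt G ‹_› ‹_› hG ↥B inferInstance inferInstance
      inferInstance (subRep ρ B hBinv) rfl (le_of_lt (lt_of_lt_of_le hBlt hle))
    have hA' := IHn (finrank ℂ ↥B') hB'lt G ‹_› ‹_› hG ↥B' inferInstance inferInstance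
      inferInstance (subRep ρ B' hB'inv) rfl (le_of_lt (lt_of_lt_of_le hB'lt hle))
    have hfix : ∀ v ∈ B, ρ g v = v := by
      intro v hv
      have h1 := hA g hg
      have h2 := DFunLike.congr_fun h1 (⟨v, hv⟩ : ↥B)
      have h3 := congrArg Subtype.val h2
      rwa [subRep_apply] at h3
    have hfix' : ∀ v ∈ B', ρ g v = v := by
      intro v hv
      have h1 := hA' g hg
      have h2 := DFunLike.congr_fun h1 (⟨v, hv⟩ : ↥B')
      have h3 := congrArg Subtype.val h2
      rwa [subRep_apply] at h3
    ext v
    have hv : v ∈ B ⊔ B' := hsupBB ▸ Submodule.mem_top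
    obtain ⟨b, hb, b', hb', rfl⟩ := Submodule.mem_sup.mp hv
    rw [map_add, hfix b hb, hfix' b' hb']
    rfl
  · -- irreducible-type case : recurse on i
    push_neg at hred
    obtain ⟨μ1, hμ1⟩ := Module.End.exists_eigenvalue T
    have hEμ1 : E μ1 ≠ ⊥ := hμ1
    have hspan : (⨆ x : G, (E μ1).map (ρ x)) = ⊤ := hred μ1 hEμ1
    -- ν is nontrivial
    have hνnt : ∃ x : G, ν x ≠ 1 := by
      by_contra h
      push_neg at h
      have hconst : ∀ x : G, (E μ1).map (ρ x) = E μ1 := fun x => by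
        rw [hmapEq, h x, one_mul]
      have htop : E μ1 = ⊤ := by
        rw [← hspan]
        rw [iSup_congr hconst, iSup_const]
      apply haS
      refine memS.mpr ⟨μ1, ?_⟩
      ext v
      have hv : v ∈ E μ1 := htop ▸ Submodule.mem_top
      rw [hEdef] at hv
      rw [Module.End.mem_eigenspace_iff] at hv
      simpa using hv
    -- construct the order-p character χ
    obtain ⟨m, hm⟩ := IsPGroup.iff_card.mp hG
    have hJex : ∃ j : ℕ, ∀ x : G, ν x ^ p ^ j = 1 := by
      refine ⟨m, fun x => ?_⟩
      have h1 : x ^ p ^ m = 1 := by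
        rw [← hm]
        exact pow_card_eq_one'
      have h2 : ν (x ^ p ^ m) = 1 := by rw [h1, hν1]
      rw [← h2]
      clear h2
      induction (p ^ m) with
      | zero => simp [hν1]
      | succ k ihk => rw [pow_succ, pow_succ, hνm, ihk]
    set J := Nat.find hJex with hJdef
    have hJ : ∀ x : G, ν x ^ p ^ J = 1 := Nat.find_spec hJex
    have hJ1 : 1 ≤ J := by
      rcases Nat.eq_zero_or_pos J with h0 | h1
      · exfalso
        obtain ⟨x, hx⟩ := hνnt
        have := hJ x
        rw [h0, pow_zero, pow_one] at this
        exact hx this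
      · exact h1
    have hJmin : ¬∀ x : G, ν x ^ p ^ (J - 1) = 1 := Nat.find_min hJex (by omega)
    push_neg at hJmin
    -- χ as a hom to ℂˣ
    set νm : G →* ℂ := { toFun := ν, map_one' := hν1, map_mul' := hνm } with hνmdef
    set νu : G →* ℂˣ := νm.toHomUnits with hνudef
    have hνu : ∀ x : G, (νu x : ℂ) = ν x := fun x => rfl
    set χ : G →* ℂˣ := (powMonoidHom (p ^ (J - 1))).comp νu with hχdef
    have hχval : ∀ x : G, (χ x : ℂ) = ν x ^ p ^ (J - 1) := by
      intro x
      rw [hχdef]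
      simp [powMonoidHom, hνu]
    have hχp : ∀ x : G, χ x ^ p = 1 := by
      intro x
      have h1 : (χ x : ℂ) ^ p = 1 := by
        rw [hχval, ← pow_mul, ← pow_succ]
        have : p ^ (J - 1 + 1) = p ^ J := by congr 1; omega
        rw [this]
        exact hJ x
      ext
      push_cast
      exact h1
    have hχnt : ∃ x : G, χ x ≠ 1 := by
      obtain ⟨x, hx⟩ := hJmin
      refine ⟨x, fun h => hx ?_⟩
      have := congrArg (Units.val) h
      rwa [hχval] at this

    -- μ1 is nonzero
    have hμ1ne0 : μ1 ≠ 0 := by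
      intro h0
      apply hEμ1
      rw [hEdef, h0]
      rw [eq_bot_iff]
      intro v hv
      have hv' : T v = (0 : ℂ) • v := Module.End.mem_eigenspace_iff.mp hv
      rw [zero_smul] at hv'
      have : v = 0 := by
        calc v = ρ a⁻¹ (ρ a v) := (happly a v).symm
          _ = ρ a⁻¹ 0 := by rw [← hTdef, hv']
          _ = 0 := by simp
      simpa using this
    -- the subgroup H = ker χ and the range C₀
    set H : Subgroup G := χ.ker with hHdef
    set C₀ : Subgroup ℂˣ := χ.range with hC₀def
    haveI hC₀fin : Finite ↥C₀ :=
      Finite.of_surjective χ.rangeRestrict χ.rangeRestrict_surjective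
    haveI : IsCyclic ↥C₀ := subgroup_units_cyclic C₀
    obtain ⟨γ, hγ⟩ := IsCyclic.exists_generator (α := ↥C₀)
    have hγp : γ ^ p = 1 := by
      obtain ⟨x, hx⟩ := γ.2
      apply Subtype.ext
      rw [Subgroup.coe_pow]
      have h1 : (γ : ℂˣ) = χ x := hx.symm
      rw [h1, hχp x]
      rfl
    have hγ1 : γ ≠ 1 := by
      intro h
      obtain ⟨x, hx⟩ := hχnt
      apply hx
      have hmem : χ x ∈ C₀ := ⟨x, rfl⟩
      have h2 := hγ ⟨χ x, hmem⟩
      rw [h, Subgroup.zpowers_one_eq_bot, Subgroup.mem_bot] at h2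
      have := congrArg (Subtype.val) h2
      exact this
    have hγord : orderOf γ = p := orderOf_eq_prime hγp hγ1
    haveI : Fintype ↥C₀ := Fintype.ofFinite _
    have hcard : Nat.card ↥C₀ = p := (orderOf_eq_card_of_forall_mem_zpowers hγ).symm.trans hγord
    -- sector submodules
    set W : ↥C₀ → Submodule ℂ V :=
      fun t => ⨆ x : G, ⨆ (_ : χ x = ↑t), (E μ1).map (ρ x) with hWdef
    have hWtop : ⨆ t, W t = ⊤ := by
      rw [eq_top_iff, ← hspan]
      refine iSup_le fun x => ?_
      have h1 : (E μ1).map (ρ x) ≤ W ⟨χ x, ⟨x, rfl⟩⟩ := by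
        rw [hWdef]
        exact le_iSup₂ (f := fun (y : G) (_ : χ y = χ x) => (E μ1).map (ρ y)) x rfl
      exact le_trans h1 (le_iSup W _)
    -- invariance under H
    have hWinv : ∀ (t : ↥C₀) (y : G), y ∈ H → ∀ v ∈ W t, ρ y v ∈ W t := by
      intro t y hy v hv
      have hle' : (W t).map (ρ y) ≤ W t := by
        rw [hWdef]
        simp only [Submodule.map_iSup]
        refine iSup_le fun x => iSup_le fun hx => ?_
        rw [← Submodule.map_comp, ← Module.End.mul_eq_comp, ← map_mul]
        have hc : χ (y * x) = ↑t := by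
          rw [map_mul, MonoidHom.mem_ker.mp hy, one_mul, hx]
        exact le_iSup₂ (f := fun (z : G) (_ : χ z = ↑t) => (E μ1).map (ρ z)) (y * x) hc
      exact hle' ⟨v, hv, rfl⟩
    -- translation between sectors
    have hWmap : ∀ (y : G) (t : ↥C₀), (W t).map (ρ y) = W (⟨χ y, ⟨y, rfl⟩⟩ * t) := by
      intro y t
      apply le_antisymm
      · rw [hWdef]
        simp only [Submodule.map_iSup]
        refine iSup_le fun x => iSup_le fun hx => ?_
        rw [← Submodule.map_comp, ← Module.End.mul_eq_comp, ← map_mul]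
        have hc : χ (y * x) = ↑(⟨χ y, ⟨y, rfl⟩⟩ * t : ↥C₀) := by
          rw [map_mul, hx]; rfl
        exact le_iSup₂ (f := fun (z : G)
          (_ : χ z = ↑(⟨χ y, ⟨y, rfl⟩⟩ * t : ↥C₀)) => (E μ1).map (ρ z)) (y * x) hc
      · conv_lhs => rw [hWdef]
        refine iSup_le fun x => iSup_le fun hx => ?_
        have hsplit : (E μ1).map (ρ x) = ((E μ1).map (ρ (y⁻¹ * x))).map (ρ y) := by
          rw [← Submodule.map_comp, ← Module.End.mul_eq_comp, ← map_mul,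
            show y * (y⁻¹ * x) = x by group]
        rw [hsplit]
        apply Submodule.map_mono
        have hc : χ (y⁻¹ * x) = ↑t := by
          rw [map_mul, hx, map_inv]
          show (χ y)⁻¹ * ((χ y) * ↑t) = ↑t
          rw [inv_mul_cancel_left]
        rw [hWdef]
        exact le_iSup₂ (f := fun (z : G) (_ : χ z = ↑t) => (E μ1).map (ρ z)) (y⁻¹ * x) hc
    have hconst : ∀ t : ↥C₀, finrank ℂ ↥(W t) = finrank ℂ ↥(W 1) := by
      intro t
      obtain ⟨y, hy⟩ := t.2
      have h1 : (⟨χ y, ⟨y, rfl⟩⟩ : ↥C₀) = t := Subtype.ext hy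
      have h2 := hWmap y 1
      rw [mul_one, h1] at h2
      rw [← h2, hfr]
    -- independence of sectors
    set A : ↥C₀ → Set ℂ := fun t => {c : ℂ | ∃ x : G, χ x = ↑t ∧ ν x * μ1 = c} with hAdef
    have hWle : ∀ t, W t ≤ ⨆ c ∈ A t, E c := by
      intro t
      rw [hWdef]
      refine iSup_le fun x => iSup_le fun hx => ?_
      rw [hmapEq x μ1]
      exact le_biSup E ⟨x, hx, rfl⟩
    have hsets : ∀ t t' : ↥C₀, t ≠ t' → Disjoint (A t) (A t') := by
      intro t t' hne
      rw [Set.disjoint_left]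
      rintro c ⟨x, hx, rfl⟩ ⟨x', hx', he⟩
      apply hne
      have hνeq : ν x' = ν x := mul_right_cancel₀ hμ1ne0 he
      have hχeq : χ x = χ x' := by
        apply Units.ext
        rw [hχval, hχval, hνeq]
      apply Subtype.ext
      rw [← hx, ← hx', hχeq]
    have hWind : iSupIndep W := by
      intro t
      have hsub : (⨆ (t' : ↥C₀) (_ : t' ≠ t), W t') ≤
          ⨆ c ∈ ⋃ t' ∈ {s : ↥C₀ | s ≠ t}, A t', E c := by
        refine iSup_le fun t' => iSup_le fun ht' => le_trans (hWle t') (biSup_mono ?_)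
        intro c hc
        exact Set.mem_biUnion ht' hc
      have hdisjsets : Disjoint (A t) (⋃ t' ∈ {s : ↥C₀ | s ≠ t}, A t') := by
        rw [Set.disjoint_left]
        intro c hcA hcU
        obtain ⟨t', ht', hct'⟩ := Set.mem_iUnion₂.mp hcU
        exact Set.disjoint_left.mp (hsets t t' (Ne.symm ht')) hcA hct'
      exact Disjoint.mono (hWle t) hsub (disj_biSup E T.eigenspaces_iSupIndep hdisjsets)
    -- dimension bound
    have hsum := sum_finrank_le W hWind
    have hsum2 : ∑ t : ↥C₀, finrank ℂ ↥(W t) = p * finrank ℂ ↥(W 1) := by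
      rw [Finset.sum_congr rfl fun t _ => hconst t, Finset.sum_const, Finset.card_univ,
        smul_eq_mul, ← Nat.card_eq_fintype_card, hcard]
    have hd : finrank ℂ ↥(W 1) ≤ p ^ (i - 1) := by
      have h1 : p * finrank ℂ ↥(W 1) ≤ p ^ i := by
        rw [← hsum2]; rw [hn] at hsum; exact le_trans hsum hle
      have h2 : p ^ i = p * p ^ (i - 1) := by
        rw [← pow_succ']
        congr 1
        omega
      rw [h2] at h1
      exact Nat.le_of_mul_le_mul_left h1 hp.pos
    have hWdim : ∀ t, finrank ℂ ↥(W t) ≤ p ^ (i - 1) := fun t => (hconst t).trans_le hd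
    -- apply the induction hypothesis on i to H acting on each W t
    have hH : IsPGroup p ↥H := hG.to_subgroup H
    set ρH : Representation ℂ ↥H V := ρ.comp H.subtype with hρHdef
    have hWinvH : ∀ (t : ↥C₀) (y : ↥H), ∀ v ∈ W t, ρH y v ∈ W t :=
      fun t y v hv => hWinv t ↑y y.2 v hv
    have hIH : ∀ (t : ↥C₀), ∀ y ∈ derivedSeries ↥H i, subRep ρH (W t) (hWinvH t) y = 1 := by
      intro t y hy
      have hmem : y ∈ derivedSeries ↥H ((i - 1) + 1) := by
        have : (i - 1) + 1 = i := by omega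
        rw [this]
        exact hy
      exact IHi (i - 1) (by omega) (finrank ℂ ↥(W t)) ↥H inferInstance inferInstance hH
        ↥(W t) inferInstance inferInstance inferInstance (subRep ρH (W t) (hWinvH t)) rfl
        (hWdim t) y hmem
    -- the derived series chain
    have hcommH : derivedSeries G 1 ≤ H := by
      rw [derivedSeries_one]
      exact Abelianization.commutator_subset_ker χ
    obtain ⟨y, hy, hyg⟩ := derived_chain H hcommH i hg
    -- conclude
    have hfix : ∀ t, ∀ v ∈ W t, ρ g v = v := by
      intro t v hv
      have h1 := hIH t y hy
      have h2 := DFunLike.congr_fun h1 (⟨v, hv⟩ : ↥(W t))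
      have h3 := congrArg Subtype.val h2
      rw [subRep_apply] at h3
      have h4 : ρH y v = ρ g v := by rw [hρHdef, ← hyg]; rfl
      rw [h4] at h3
      exact h3
    have hloc : (⨆ t, W t) ≤ LinearMap.eqLocus (ρ g) (1 : Module.End ℂ V) := by
      refine iSup_le fun t => ?_
      intro v hv
      rw [LinearMap.mem_eqLocus]
      show ρ g v = (1 : Module.End ℂ V) v
      rw [Module.End.one_apply]
      exact hfix t v hv
    ext v
    have hv := hloc (hWtop ▸ Submodule.mem_top : v ∈ ⨆ t, W t)
    rw [LinearMap.mem_eqLocus] at hv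
    exact hv

end Main

/-- For a finite p-group `G` and `i ≥ 1`, the `i`-th derived subgroup
`G⁽ⁱ⁾` lies in the kernel of every complex representation of `G` of
dimension at most `p^{i-1}`. -/
theorem stmt13 {p : ℕ} (hp : p.Prime) {G : Type*} [Group G] [Finite G]
    (hG : IsPGroup p G) (i : ℕ) (hi : 1 ≤ i)
    (V : Type*) [AddCommGroup V] [Module ℂ V] [FiniteDimensional ℂ V]
    (ρ : Representation ℂ G V)
    (hdim : Module.finrank ℂ V ≤ p ^ (i - 1)) :
    ∀ g ∈ derivedSeries G i, ρ g = 1 := by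
  have h := main hp (i - 1) (Module.finrank ℂ V) G inferInstance inferInstance hG
    V inferInstance inferInstance inferInstance ρ rfl hdim
  have hii : (i - 1) + 1 = i := by omega
  rwa [hii] at h
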